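/- Let a, b ∈ (0,1). Let N be a random variable with values in the positive integers which stochastically dominates a geometric random variable with parameter a, and let (X_n)_{n≥1} be i.i.d. geometric random variables with parameter b, independent of N. Then the random variable S = 1 + Σ_{n=1}^{N} (X_n − 1) stochastically dominates a geometric random variable with parameter ab/(1 − b + ab). -/

import Mathlib

open MeasureTheory ProbabilityTheory Finset
open scoped ENNReal

section GeomDomAux

lemma nat_mset (s : Set ℕ) : MeasurableSet s := trivial

variable {Ω : Type*} [MeasurableSpace Ω] {μ : Measure Ω}

/-- partition of a preimage over a countable codomain -/
lemma measure_preimage_nat (g : Ω → ℕ) (hg : Measurable g) (p : ℕ → Prop) [DecidablePred p] :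
    μ (g ⁻¹' {x | p x}) = ∑' m : ℕ, if p m then μ (g ⁻¹' {m}) else 0 := by
  set s : Set ℕ := {x | p x} with hs
  have h1 : g ⁻¹' s = ⋃ m : ℕ, g ⁻¹' ({m} ∩ s) := by
    ext ω
    simp only [Set.mem_preimage, Set.mem_iUnion, Set.mem_inter_iff, Set.mem_singleton_iff]
    exact ⟨fun h => ⟨g ω, rfl, h⟩, fun ⟨m, hm, hs⟩ => hm ▸ hs⟩
  rw [h1, measure_iUnion ?_ (fun m => hg (nat_mset _))]
  · refine tsum_congr fun m => ?_
    by_cases hm : p m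
    · rw [if_pos hm, Set.inter_eq_self_of_subset_left (by simpa [hs] using hm)]
    · rw [if_neg hm]
      have : {m} ∩ s = (∅ : Set ℕ) := by
        ext x; simp only [Set.mem_inter_iff, Set.mem_singleton_iff, Set.mem_empty_iff_false,
          iff_false, not_and]
        rintro rfl; exact hm
      simp [this]
  · intro i j hij
    simp only [Function.onFun, Set.disjoint_left]
    intro ω hi hj
    exact hij (by
      have h1 : g ω = i := hi.1
      have h2 : g ω = j := hj.1
      omega)

/-- convolution for independent ℕ-valued random variables -/
lemma measure_add_eq {U V : Ω → ℕ} (hU : Measurable U) (hV : Measurable V)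
    (h : IndepFun U V μ) (j : ℕ) :
    μ {ω | U ω + V ω = j} =
      ∑ i ∈ range (j + 1), μ {ω | U ω = i} * μ {ω | V ω = j - i} := by
  have h1 : {ω | U ω + V ω = j} = ⋃ i ∈ range (j + 1), (U ⁻¹' {i} ∩ V ⁻¹' {j - i}) := by
    ext ω
    simp only [Set.mem_setOf_eq, Set.mem_iUnion, mem_range, Set.mem_inter_iff,
      Set.mem_preimage, Set.mem_singleton_iff]
    constructor
    · intro hj; exact ⟨U ω, by omega, rfl, by omega⟩
    · rintro ⟨i, hi, h1, h2⟩; omega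
  rw [h1, measure_biUnion_finset ?_ (fun i _ => (hU (nat_mset _)).inter (hV (nat_mset _)))]
  · exact Finset.sum_congr rfl fun i _ =>
      h.measure_inter_preimage_eq_mul _ _ (nat_mset _) (nat_mset _)
  · intro i _ i' _ hii'
    simp only [Set.disjoint_left]
    intro ω hi hi'
    exact hii' (by
      have h1 : U ω = i := hi.1
      have h2 : U ω = i' := hi'.1
      omega)

lemma telescope {f : ℕ → ℝ≥0∞} (hf0 : f 0 = 0) (hmono : Monotone f) (m : ℕ) :
    f m = ∑ j ∈ range (m + 1), (f j - f (j - 1)) := by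
  induction m with
  | zero => simp [hf0]
  | succ m ih =>
    rw [Finset.sum_range_succ, ← ih, Nat.add_sub_cancel]
    exact (add_tsub_cancel_of_le (hmono (Nat.le_succ m))).symm

lemma abel (w f : ℕ → ℝ≥0∞) (hf0 : f 0 = 0) (hmono : Monotone f) :
    ∑' m, w m * f m
      = ∑' j, (f j - f (j - 1)) * ∑' m, (if j ≤ m then w m else 0) := by
  have h1 : ∀ m, w m * f m = ∑' j, (if j ≤ m then w m * (f j - f (j - 1)) else 0) := by
    intro m
    rw [tsum_eq_sum (s := range (m + 1))
      (fun j hj => if_neg (fun h => hj (mem_range.2 (by omega))))]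
    rw [telescope hf0 hmono m, Finset.mul_sum]
    exact Finset.sum_congr rfl fun j hj => (if_pos (by
      have := mem_range.1 hj; omega)).symm
  calc ∑' m, w m * f m
      = ∑' m, ∑' j, (if j ≤ m then w m * (f j - f (j - 1)) else 0) := tsum_congr h1
    _ = ∑' j, ∑' m, (if j ≤ m then w m * (f j - f (j - 1)) else 0) := ENNReal.tsum_comm
    _ = ∑' j, ∑' m, (f j - f (j - 1)) * (if j ≤ m then w m else 0) := by
        refine tsum_congr fun j => tsum_congr fun m => ?_
        by_cases h : j ≤ m <;> simp [h, mul_comm]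
    _ = ∑' j, (f j - f (j - 1)) * ∑' m, (if j ≤ m then w m else 0) := by
        refine tsum_congr fun j => ?_
        rw [ENNReal.tsum_mul_left]

lemma tail_tsum (g : ℕ → ℝ≥0∞) (j : ℕ) :
    (∑' m, if j ≤ m then g m else 0) = ∑' i, g (i + j) := by
  rw [← Summable.sum_add_tsum_nat_add' (f := fun m => if j ≤ m then g m else 0) (k := j)
    ENNReal.summable]
  have h0 : ∑ i ∈ range j, (if j ≤ i then g i else 0) = 0 := by
    refine Finset.sum_eq_zero fun i hi => if_neg (by have := mem_range.1 hi; omega)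
  rw [h0, zero_add]
  exact tsum_congr fun i => if_pos (Nat.le_add_left j i)

/-- geometric tail sum -/
lemma geom_tail {a : ℝ} (ha0 : 0 < a) (ha1 : a < 1) (j : ℕ) :
    (∑' i : ℕ, ENNReal.ofReal (a * (1 - a) ^ (i + j))) = ENNReal.ofReal ((1 - a) ^ j) := by
  have h1a : (0:ℝ) ≤ 1 - a := by linarith
  have hsum : Summable (fun i : ℕ => a * (1 - a) ^ (i + j)) := by
    have h : Summable (fun i : ℕ => (1 - a) ^ i) := summable_geometric_of_lt_one h1a (by linarith)
    have h2 := h.mul_left (a * (1 - a) ^ j)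
    refine h2.congr fun i => ?_
    rw [pow_add]; ring
  rw [← ENNReal.ofReal_tsum_of_nonneg (fun i => by positivity) hsum]
  congr 1
  have heq : ∀ i : ℕ, a * (1 - a) ^ (i + j) = (a * (1 - a) ^ j) * (1 - a) ^ i := by
    intro i; rw [pow_add]; ring
  rw [tsum_congr heq, tsum_mul_left, tsum_geometric_of_lt_one h1a (by linarith)]
  have h3 : (1 - (1 - a))⁻¹ = a⁻¹ := by norm_num
  rw [h3]
  field_simp

end GeomDomAux

theorem geometric_sum_stochastic_domination
    {Ω : Type*} [MeasurableSpace Ω] (μ : Measure Ω) [IsProbabilityMeasure μ]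
    (a b : ℝ) (ha : a ∈ Set.Ioo (0:ℝ) 1) (hb : b ∈ Set.Ioo (0:ℝ) 1)
    (N : Ω → ℕ) (X : ℕ → Ω → ℕ)
    (hNmeas : Measurable N) (hXmeas : ∀ n, Measurable (X n))
    (hNpos : ∀ ω, 1 ≤ N ω)
    (hNdom : ∀ k : ℕ, ENNReal.ofReal ((1 - a) ^ (k - 1)) ≤ μ {ω | k ≤ N ω})
    (hX : ∀ n, ∀ k : ℕ, 1 ≤ k →
      μ {ω | X n ω = k} = ENNReal.ofReal (b * (1 - b) ^ (k - 1)))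
    (hindep : iIndepFun
      (fun i : Option ℕ => Option.elim i N X) μ) :
    ∀ k : ℕ,
      ENNReal.ofReal ((1 - a * b / (1 - b + a * b)) ^ (k - 1))
        ≤ μ {ω | k ≤ 1 + ∑ n ∈ Finset.Icc 1 (N ω), (X n ω - 1)} := by
  obtain ⟨ha0, ha1⟩ := ha
  obtain ⟨hb0, hb1⟩ := hb
  -- constants
  have hD : 0 < 1 - b + a * b := by nlinarith
  set D : ℝ := 1 - b + a * b with hD_def
  set c : ℝ := a * b / D with hc_def
  set q : ℝ := (1 - b) / D with hq_def
  have hq_eq : 1 - a * b / D = q := by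
    rw [hq_def]; field_simp; rw [hD_def]; ring
  have hc0 : 0 < c := div_pos (by positivity) hD
  have hq0 : 0 ≤ q := div_nonneg (by linarith) hD.le
  have hcq : c = 1 - q := by
    rw [hc_def, hq_def]; field_simp; rw [hD_def]; ring
  have hq1 : q < 1 := by
    rw [hq_def, div_lt_one hD, hD_def]; nlinarith
  set x : ℝ := (1 - a) * b with hx_def
  have hx0 : 0 ≤ x := mul_nonneg (by linarith) hb0.le
  have hx1 : x < 1 := by rw [hx_def]; nlinarith
  have hxnorm : ‖x‖ < 1 := by rw [Real.norm_eq_abs, abs_of_nonneg hx0]; exact hx1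
  have hDx : 1 - x = D := by rw [hx_def, hD_def]; ring
  -- random variables
  set Y : ℕ → Ω → ℕ := fun n ω => X n ω - 1 with hY_def
  have hYmeas : ∀ n, Measurable (Y n) := fun n => (hXmeas n).sub measurable_const
  set G : Option ℕ → Ω → ℕ := fun o => o.elim N Y with hG_def
  have hGmeas : ∀ o, Measurable (G o) := by rintro (_|n); exacts [hNmeas, hYmeas n]
  have hGindep : iIndepFun G μ := by
    have h := hindep.comp (fun o : Option ℕ => fun t : ℕ => o.elim t (fun _ => t - 1))
      (fun o => by
        cases o with
        | none => exact measurable_id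
        | some _ => exact (measurable_id.sub measurable_const : Measurable fun k : ℕ => k - 1))
    convert h using 1
    funext o; cases o <;> rfl
  set T : ℕ → Ω → ℕ := fun m ω => ∑ n ∈ Finset.Icc 1 m, Y n ω with hT_def
  have hTmeas : ∀ m, Measurable (T m) := fun m => Finset.measurable_sum _ fun n _ => hYmeas n
  have hsum_im : ∀ m, (∑ j ∈ (Finset.Icc 1 m).image some, G j) = T m := by
    intro m; funext ω
    rw [Finset.sum_apply, Finset.sum_image (fun _ _ _ _ h => Option.some_injective _ h)]
    rfl
  have hTN : ∀ m, IndepFun (T m) N μ := by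
    intro m
    have h := hGindep.indepFun_finsetSum_of_notMem hGmeas
      (s := (Finset.Icc 1 m).image some) (i := none) (by simp)
    rwa [hsum_im m] at h
  have hTY : ∀ m, IndepFun (T m) (Y (m + 1)) μ := by
    intro m
    have h := hGindep.indepFun_finsetSum_of_notMem hGmeas
      (s := (Finset.Icc 1 m).image some) (i := some (m + 1)) (by simp)
    rwa [hsum_im m] at h
  -- distribution of Y
  have hX0 : ∀ n, μ {ω | X n ω = 0} = 0 := by
    intro n
    have h1 := measure_preimage_nat (μ := μ) (X n) (hXmeas n) (fun _ => True)
    simp only [if_true] at h1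
    have h2 : (X n) ⁻¹' {x | True} = Set.univ := by ext ω; simp
    rw [h2, measure_univ, tsum_eq_zero_add' ENNReal.summable] at h1
    have h3 : ∑' k : ℕ, μ ((X n) ⁻¹' {k + 1}) = 1 := by
      have h4 : ∀ k : ℕ, μ ((X n) ⁻¹' {k + 1}) = ENNReal.ofReal (b * (1 - b) ^ (k + 0)) := by
        intro k
        have := hX n (k + 1) (by omega)
        rw [show k + 0 = k + 1 - 1 by omega]; exact this
      rw [tsum_congr h4, geom_tail hb0 hb1 0]
      simp
    rw [h3] at h1
    have h5 : μ ((X n) ⁻¹' {0}) + 1 = 0 + 1 := by rw [zero_add]; exact h1.symm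
    have h6 := WithTop.add_right_cancel (by simp : (1 : ℝ≥0∞) ≠ ⊤) h5
    exact h6
  have hY_dist : ∀ n j, μ {ω | Y n ω = j} = ENNReal.ofReal (b * (1 - b) ^ j) := by
    intro n j
    rcases Nat.eq_zero_or_pos j with rfl | hj
    · have hset : {ω | Y n ω = 0} = {ω | X n ω = 0} ∪ {ω | X n ω = 1} := by
        ext ω; simp only [hY_def, Set.mem_setOf_eq, Set.mem_union]; omega
      have hdj : Disjoint {ω | X n ω = 0} {ω | X n ω = 1} := by
        rw [Set.disjoint_left]; intro ω h1 h2
        simp only [Set.mem_setOf_eq] at h1 h2; omega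
      rw [hset, measure_union hdj (show MeasurableSet {ω | X n ω = 1} from
        (hXmeas n) (nat_mset {1})), hX0 n, hX n 1 le_rfl, zero_add]
    · have hset : {ω | Y n ω = j} = {ω | X n ω = j + 1} := by
        ext ω; simp only [hY_def, Set.mem_setOf_eq]; omega
      rw [hset, hX n (j + 1) (by omega)]
      simp
  -- distribution of T
  have hT_dist : ∀ i j : ℕ, μ {ω | T (i + 1) ω = j}
      = ENNReal.ofReal (((j + i).choose i : ℝ) * (b ^ (i + 1) * (1 - b) ^ j)) := by
    intro i
    induction i with
    | zero =>
      intro j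
      have hset : {ω | T 1 ω = j} = {ω | Y 1 ω = j} := by
        ext ω; simp [hT_def]
      rw [hset, hY_dist 1 j]
      simp
    | succ i ih =>
      intro j
      have hTsucc : ∀ ω, T (i + 1 + 1) ω = T (i + 1) ω + Y (i + 1 + 1) ω := by
        intro ω
        simp only [hT_def]
        rw [show Finset.Icc 1 (i + 1 + 1) = insert (i + 1 + 1) (Finset.Icc 1 (i + 1)) by
          ext t; simp only [Finset.mem_Icc, Finset.mem_insert]; omega]
        rw [Finset.sum_insert (by simp)]
        omega
      have hset : {ω | T (i + 1 + 1) ω = j} = {ω | T (i + 1) ω + Y (i + 1 + 1) ω = j} := by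
        ext ω; simp only [Set.mem_setOf_eq, hTsucc]
      rw [hset, measure_add_eq (hTmeas (i + 1)) (hYmeas (i + 1 + 1)) (hTY (i + 1)) j]
      have hterm : ∀ l ∈ range (j + 1),
          μ {ω | T (i + 1) ω = l} * μ {ω | Y (i + 1 + 1) ω = j - l}
            = ENNReal.ofReal (((l + i).choose i : ℝ) * (b ^ (i + 2) * (1 - b) ^ j)) := by
        intro l hl
        have hl' : l ≤ j := by have := mem_range.1 hl; omega
        rw [ih l, hY_dist (i + 1 + 1) (j - l), ← ENNReal.ofReal_mul
          (mul_nonneg (Nat.cast_nonneg _)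
            (mul_nonneg (pow_nonneg hb0.le _) (pow_nonneg (by linarith) _)))]
        congr 1
        have hpow : (1 - b) ^ l * (1 - b) ^ (j - l) = (1 - b) ^ j := by
          rw [← pow_add, Nat.add_sub_cancel' hl']
        linear_combination (((l + i).choose i : ℝ) * b ^ (i + 2)) * hpow
      rw [Finset.sum_congr rfl hterm,
        ← ENNReal.ofReal_sum_of_nonneg (fun l _ => mul_nonneg (Nat.cast_nonneg _)
          (mul_nonneg (pow_nonneg hb0.le _) (pow_nonneg (by linarith) _))), ← Finset.sum_mul,
        ← Nat.cast_sum]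
      have hhs : ∑ l ∈ range (j + 1), (l + i).choose i = (j + (i + 1)).choose (i + 1) := by
        rw [Nat.sum_range_add_choose j i, Nat.add_assoc]
      rw [hhs]
  -- main argument
  intro k
  rcases le_or_gt k 1 with hk | hk
  · have huniv : {ω | k ≤ 1 + ∑ n ∈ Finset.Icc 1 (N ω), (X n ω - 1)} = Set.univ :=
      Set.eq_univ_of_forall fun ω => by
        simp only [Set.mem_setOf_eq]; omega
    rw [huniv, measure_univ]
    have hk1 : k - 1 = 0 := by omega
    rw [hk1, pow_zero]
    simp
  · obtain ⟨r, rfl, hr⟩ : ∃ r, k = r + 1 ∧ 1 ≤ r := ⟨k - 1, by omega, by omega⟩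
    set E : ℕ → Set Ω := fun m => T m ⁻¹' {t | r ≤ t} with hE_def
    have hEmeas : ∀ m, MeasurableSet (E m) := fun m => (hTmeas m) (nat_mset _)
    set f : ℕ → ℝ≥0∞ := fun m => μ (E m) with hf_def
    have hf0 : f 0 = 0 := by
      have : E 0 = ∅ := by
        ext ω; simp [hE_def, hT_def]; omega
      rw [hf_def]; simp [this]
    have hfmono : Monotone f := by
      intro m m' hmm'
      refine measure_mono fun ω hω => ?_
      simp only [hE_def, Set.mem_preimage, Set.mem_setOf_eq, hT_def] at hω ⊢
      refine le_trans hω (Finset.sum_le_sum_of_subset (Finset.Icc_subset_Icc_right hmm'))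
    set p : ℕ → ℝ≥0∞ := fun m => μ (N ⁻¹' {m}) with hp_def
    set w : ℕ → ℝ≥0∞ := fun m => if m = 0 then 0 else ENNReal.ofReal (a * (1 - a) ^ (m - 1))
      with hw_def
    -- event decomposition
    have hEvent : {ω | r + 1 ≤ 1 + ∑ n ∈ Finset.Icc 1 (N ω), (X n ω - 1)}
        = ⋃ m : ℕ, (N ⁻¹' {m} ∩ E m) := by
      ext ω
      simp only [Set.mem_setOf_eq, Set.mem_iUnion, Set.mem_inter_iff, Set.mem_preimage,
        Set.mem_singleton_iff, hE_def, hT_def, hY_def]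
      constructor
      · intro h; exact ⟨N ω, rfl, by omega⟩
      · rintro ⟨m, rfl, h⟩; omega
    have hdisj : Pairwise (Function.onFun Disjoint fun m => N ⁻¹' {m} ∩ E m) := by
      intro i j hij
      simp only [Function.onFun, Set.disjoint_left]
      rintro ω ⟨h1, _⟩ ⟨h2, _⟩
      simp only [Set.mem_preimage, Set.mem_singleton_iff] at h1 h2
      exact hij (by omega)
    have hindep_term : ∀ m, μ (N ⁻¹' {m} ∩ E m) = p m * f m := by
      intro m
      have h := (hTN m).measure_inter_preimage_eq_mul {t | r ≤ t} {m} (nat_mset _) (nat_mset _)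
      rw [Set.inter_comm] at h
      rw [hE_def, hp_def, hf_def, h, mul_comm]
    -- tails
    have hptail : ∀ j : ℕ, 1 ≤ j →
        ENNReal.ofReal ((1 - a) ^ (j - 1)) ≤ ∑' m, (if j ≤ m then p m else 0) := by
      intro j hj
      have h1 := measure_preimage_nat (μ := μ) N hNmeas (fun m => j ≤ m)
      have h2 : N ⁻¹' {x | j ≤ x} = {ω | j ≤ N ω} := rfl
      rw [h2] at h1
      rw [← h1]
      exact hNdom j
    have hwtail : ∀ j : ℕ, 1 ≤ j →
        (∑' m, (if j ≤ m then w m else 0)) = ENNReal.ofReal ((1 - a) ^ (j - 1)) := by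
      intro j hj
      rw [tail_tsum]
      have h1 : ∀ i : ℕ, w (i + j) = ENNReal.ofReal (a * (1 - a) ^ (i + (j - 1))) := by
        intro i
        rw [hw_def]
        simp only [if_neg (by omega : ¬(i + j = 0))]
        have he : i + j - 1 = i + (j - 1) := by omega
        rw [he]
      rw [tsum_congr h1, geom_tail ha0 ha1 (j - 1)]
    -- value of the geometric mixture
    have hw_shift : ∀ i : ℕ, w (i + 1) = ENNReal.ofReal (a * (1 - a) ^ i) := by
      intro i
      rw [hw_def]
      simp only [if_neg (by omega : ¬(i + 1 = 0)), Nat.add_sub_cancel]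
    have hw_sum : ∑' i : ℕ, w (i + 1) = 1 := by
      rw [tsum_congr hw_shift]
      have := geom_tail ha0 ha1 0
      simpa using this
    -- f (i+1) as complement
    set sc : ℕ → ℝ≥0∞ := fun m => ∑ j ∈ range r, μ {ω | T m ω = j} with hsc_def
    have hsc : ∀ m, sc m = μ ((E m)ᶜ) := by
      intro m
      have hsset : (⋃ j ∈ range r, T m ⁻¹' {j}) = (E m)ᶜ := by
        ext ω
        simp only [Set.mem_iUnion, mem_range, Set.mem_preimage, Set.mem_singleton_iff,
          Set.mem_compl_iff, hE_def, Set.mem_setOf_eq]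
        constructor
        · rintro ⟨j, hj, hTj⟩; omega
        · intro h; exact ⟨T m ω, by omega, rfl⟩
      have h2 : μ ((E m)ᶜ) = ∑ j ∈ range r, μ (T m ⁻¹' {j}) := by
        rw [← hsset, measure_biUnion_finset ?_ (fun j _ => (hTmeas m) (nat_mset _))]
        intro i _ i' _ hii'
        simp only [Set.disjoint_left]
        intro ω hi hi'
        exact hii' (by
          have e1 : T m ω = i := hi
          have e2 : T m ω = i' := hi'
          omega)
      rw [hsc_def, h2]
      rfl
    have hsc_le : ∀ m, sc m ≤ 1 := fun m => (hsc m).le.trans prob_le_one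
    have hfcompl : ∀ m, f m = 1 - sc m := by
      intro m
      have h3 := measure_compl (hEmeas m) (measure_ne_top μ _)
      rw [measure_univ] at h3
      rw [hf_def, hsc m, h3, ENNReal.sub_sub_cancel ENNReal.one_ne_top prob_le_one]
    -- value of the geometric mixture sum
    have hmix : ∑' m, w m * f m = 1 - ENNReal.ofReal (1 - q ^ r) := by
      rw [tsum_eq_zero_add' ENNReal.summable]
      have hw00 : w 0 * f 0 = 0 := by rw [hf0, mul_zero]
      rw [hw00, zero_add]
      have h1 : ∀ i : ℕ, w (i + 1) * f (i + 1) = w (i + 1) - w (i + 1) * sc (i + 1) := by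
        intro i
        rw [hfcompl (i + 1), ENNReal.mul_sub (fun _ _ => by
          rw [hw_shift i]; exact ENNReal.ofReal_ne_top), mul_one]
      have hle : ∀ i : ℕ, w (i + 1) * sc (i + 1) ≤ w (i + 1) := fun i =>
        (mul_le_mul_right (hsc_le (i + 1)) _).trans_eq (mul_one _)
      rw [tsum_congr h1, ENNReal.tsum_sub ?_ hle]
      · rw [hw_sum]
        congr 1
        have h2 : ∀ i : ℕ, w (i + 1) * sc (i + 1)
            = ∑ j ∈ range r, w (i + 1) * μ {ω | T (i + 1) ω = j} := by
          intro i; rw [hsc_def, Finset.mul_sum]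
        rw [tsum_congr h2, Summable.tsum_finsetSum (fun j _ => ENNReal.summable)]
        have h3 : ∀ j ∈ range r, (∑' i : ℕ, w (i + 1) * μ {ω | T (i + 1) ω = j})
            = ENNReal.ofReal (c * q ^ j) := by
          intro j _
          have h4 : ∀ i : ℕ, w (i + 1) * μ {ω | T (i + 1) ω = j}
              = ENNReal.ofReal ((a * b * (1 - b) ^ j) * (((i + j).choose j : ℝ) * x ^ i)) := by
            intro i
            rw [hw_shift i, hT_dist i j, ← ENNReal.ofReal_mul (mul_nonneg ha0.le
              (pow_nonneg (by linarith) _))]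
            congr 1
            have hchoose : ((j + i).choose i : ℕ) = ((i + j).choose j : ℕ) := by
              rw [Nat.add_comm j i, ← Nat.choose_symm (Nat.le_add_right i j)]
              congr 1
              omega
            rw [hchoose, hx_def, mul_pow]
            push_cast
            ring
          rw [tsum_congr h4, ← ENNReal.ofReal_tsum_of_nonneg
            (fun i => mul_nonneg (mul_nonneg (mul_nonneg ha0.le hb0.le)
              (pow_nonneg (by linarith) _)) (mul_nonneg (Nat.cast_nonneg _)
              (pow_nonneg hx0 _)))
            ((summable_choose_mul_geometric_of_norm_lt_one j hxnorm).mul_left _)]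
          congr 1
          rw [tsum_mul_left, tsum_choose_mul_geometric_of_norm_lt_one j hxnorm, hDx]
          rw [hc_def, hq_def, div_pow, div_mul_div_comm, mul_one_div, pow_succ']
        rw [Finset.sum_congr rfl h3, ← ENNReal.ofReal_sum_of_nonneg
          (fun j _ => mul_nonneg hc0.le (pow_nonneg hq0 _))]
        congr 1
        rw [← Finset.mul_sum, hcq]
        linear_combination (-1 : ℝ) * geom_sum_mul q r
      · exact ((ENNReal.tsum_le_tsum hle).trans_eq hw_sum).trans_lt ENNReal.one_lt_top |>.ne
    have hqr1 : q ^ r ≤ 1 := pow_le_one₀ hq0 hq1.le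
    have hmix' : ∑' m, w m * f m = ENNReal.ofReal (q ^ r) := by
      rw [hmix, ← ENNReal.ofReal_one, ← ENNReal.ofReal_sub 1 (by linarith)]
      congr 1
      ring
    have hcompare : ∑' m, w m * f m ≤ ∑' m, p m * f m := by
      rw [abel w f hf0 hfmono, abel p f hf0 hfmono]
      refine ENNReal.tsum_le_tsum fun j => ?_
      rcases Nat.eq_zero_or_pos j with rfl | hj
      · simp [hf0]
      · exact mul_le_mul_right ((hwtail j hj).le.trans (hptail j hj)) _
    calc ENNReal.ofReal ((1 - a * b / D) ^ (r + 1 - 1))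
        = ENNReal.ofReal (q ^ r) := by rw [hq_eq]; norm_num
      _ = ∑' m, w m * f m := hmix'.symm
      _ ≤ ∑' m, p m * f m := hcompare
      _ = ∑' m, μ (N ⁻¹' {m} ∩ E m) := tsum_congr fun m => (hindep_term m).symm
      _ = μ {ω | r + 1 ≤ 1 + ∑ n ∈ Finset.Icc 1 (N ω), (X n ω - 1)} := by
          rw [hEvent, measure_iUnion hdisj (fun m => (hNmeas (nat_mset _)).inter (hEmeas m))]
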